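/- arXiv:math/9810056 — 4 statements merged into one kernel-verified Lean document; each statement's English description precedes it below -/
import Mathlib

section
/- Every odd element of an exterior algebra squares to zero: if V is a module over a commutative ring and x belongs to the odd part of the exterior algebra ⋀ V (the sum of the exterior powers of odd degree), then x² = 0. -/
open CliffordAlgebra in
/-- An odd element of the exterior algebra anticommutes with every vector. -/
lemma aux_anticomm (R : Type) (M : Type) [CommRing R] [AddCommGroup M] [Module R M]
    (x : ExteriorAlgebra R M) (hx : x ∈ CliffordAlgebra.evenOdd (0 : QuadraticForm R M) 1)
    (m : M) : ι (0 : QuadraticForm R M) m * x = - (x * ι (0 : QuadraticForm R M) m) := by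
  induction x, hx using CliffordAlgebra.odd_induction with
  | ι v => exact eq_neg_of_add_eq_zero_left (ExteriorAlgebra.ι_add_mul_swap (R := R) m v)
  | add a b ha hb iha ihb =>
    rw [mul_add, add_mul, iha, ihb, neg_add]
  | ι_mul_ι_mul m₁ m₂ a ha iha =>
    have e1 : ι (0:QuadraticForm R M) m * ι 0 m₁ = - (ι 0 m₁ * ι (0:QuadraticForm R M) m) :=
      eq_neg_of_add_eq_zero_left (ExteriorAlgebra.ι_add_mul_swap (R := R) m m₁)
    have e2 : ι (0:QuadraticForm R M) m * ι 0 m₂ = - (ι 0 m₂ * ι (0:QuadraticForm R M) m) :=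
      eq_neg_of_add_eq_zero_left (ExteriorAlgebra.ι_add_mul_swap (R := R) m m₂)
    calc ι (0 : QuadraticForm R M) m * (ι 0 m₁ * ι 0 m₂ * a)
        = (ι (0:QuadraticForm R M) m * ι 0 m₁) * (ι 0 m₂ * a) := by noncomm_ring
      _ = - (ι 0 m₁ * ((ι (0:QuadraticForm R M) m * ι 0 m₂) * a)) := by rw [e1]; noncomm_ring
      _ = - (ι 0 m₁ * (- (ι 0 m₂ * ι (0:QuadraticForm R M) m) * a)) := by rw [e2]
      _ = ι 0 m₁ * ι 0 m₂ * (ι (0:QuadraticForm R M) m * a) := by noncomm_ring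
      _ = ι 0 m₁ * ι 0 m₂ * (- (a * ι (0:QuadraticForm R M) m)) := by rw [iha]
      _ = - (ι 0 m₁ * ι 0 m₂ * a * ι (0:QuadraticForm R M) m) := by noncomm_ring

open CliffordAlgebra in
/-- Two odd elements of the exterior algebra anticommute. -/
lemma aux_anticomm2 (R : Type) (M : Type) [CommRing R] [AddCommGroup M] [Module R M]
    (x y : ExteriorAlgebra R M) (hx : x ∈ CliffordAlgebra.evenOdd (0 : QuadraticForm R M) 1)
    (hy : y ∈ CliffordAlgebra.evenOdd (0 : QuadraticForm R M) 1) :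
    x * y = - (y * x) := by
  induction x, hx using CliffordAlgebra.odd_induction with
  | ι v => exact aux_anticomm R M y hy v
  | add a b ha hb iha ihb => rw [add_mul, mul_add, iha, ihb, neg_add]
  | ι_mul_ι_mul m₁ m₂ a ha iha =>
    have e1 := aux_anticomm R M y hy m₁
    have e2 := aux_anticomm R M y hy m₂
    have e1' : y * ι (0:QuadraticForm R M) m₁ = - (ι 0 m₁ * y) := by
      rw [e1, neg_neg]
    have e2' : y * ι (0:QuadraticForm R M) m₂ = - (ι 0 m₂ * y) := by
      rw [e2, neg_neg]
    calc ι 0 m₁ * ι 0 m₂ * a * y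
        = ι 0 m₁ * ι 0 m₂ * (a * y) := by noncomm_ring
      _ = ι 0 m₁ * ι 0 m₂ * (- (y * a)) := by rw [iha]
      _ = - (ι 0 m₁ * ((ι 0 m₂ * y) * a)) := by noncomm_ring
      _ = - (ι 0 m₁ * (- (y * ι (0:QuadraticForm R M) m₂) * a)) := by rw [e2', neg_neg]
      _ = (ι 0 m₁ * y) * (ι 0 m₂ * a) := by noncomm_ring
      _ = (- (y * ι (0:QuadraticForm R M) m₁)) * (ι 0 m₂ * a) := by rw [e1', neg_neg]
      _ = - (y * (ι 0 m₁ * ι 0 m₂ * a)) := by noncomm_ring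

/-- Every odd element of an exterior algebra squares to zero: if `x` belongs to the odd
part of the ℤ/2-grading of `⋀ V` by even and odd exterior degrees, then `x ^ 2 = 0`. -/
theorem stmt2 (R : Type) (M : Type) [CommRing R] [AddCommGroup M] [Module R M]
    (x : ExteriorAlgebra R M)
    (hx : x ∈ CliffordAlgebra.evenOdd (0 : QuadraticForm R M) 1) :
    x ^ 2 = 0 := by
  rw [sq]
  induction x, hx using CliffordAlgebra.odd_induction with
  | ι v => exact ExteriorAlgebra.ι_sq_zero v
  | add a b ha hb iha ihb =>
    have key := aux_anticomm2 R M a b ha hb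
    rw [add_mul, mul_add, mul_add, iha, ihb, key]
    abel
  | ι_mul_ι_mul m₁ m₂ a ha iha =>
    have e1 := aux_anticomm R M a ha m₁
    have e2 := aux_anticomm R M a ha m₂
    have e1' : a * CliffordAlgebra.ι (0:QuadraticForm R M) m₁ =
        - (CliffordAlgebra.ι 0 m₁ * a) := by rw [e1, neg_neg]
    have e2' : a * CliffordAlgebra.ι (0:QuadraticForm R M) m₂ =
        - (CliffordAlgebra.ι 0 m₂ * a) := by rw [e2, neg_neg]
    calc CliffordAlgebra.ι 0 m₁ * CliffordAlgebra.ι 0 m₂ * a *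
          (CliffordAlgebra.ι 0 m₁ * CliffordAlgebra.ι 0 m₂ * a)
        = CliffordAlgebra.ι 0 m₁ * CliffordAlgebra.ι 0 m₂ *
            ((a * CliffordAlgebra.ι 0 m₁) * (CliffordAlgebra.ι 0 m₂ * a)) := by noncomm_ring
      _ = CliffordAlgebra.ι 0 m₁ * CliffordAlgebra.ι 0 m₂ *
            ((- (CliffordAlgebra.ι 0 m₁ * a)) * (CliffordAlgebra.ι 0 m₂ * a)) := by rw [e1']
      _ = - (CliffordAlgebra.ι 0 m₁ * CliffordAlgebra.ι 0 m₂ *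
            (CliffordAlgebra.ι 0 m₁ * ((a * CliffordAlgebra.ι 0 m₂) * a))) := by noncomm_ring
      _ = - (CliffordAlgebra.ι 0 m₁ * CliffordAlgebra.ι 0 m₂ *
            (CliffordAlgebra.ι 0 m₁ * ((- (CliffordAlgebra.ι 0 m₂ * a)) * a))) := by rw [e2']
      _ = CliffordAlgebra.ι 0 m₁ * CliffordAlgebra.ι 0 m₂ * CliffordAlgebra.ι 0 m₁ *
            CliffordAlgebra.ι 0 m₂ * (a * a) := by noncomm_ring
      _ = 0 := by rw [iha, mul_zero]
end

section
/- Let k be a Hausdorff topological field, q a natural number, A a graded unital subalgebra of the Grassmann algebra ∧(q) over k, and j : A → k[ζ]/(ζ²) a surjective parity-preserving unital k-algebra homomorphism. For λ ∈ k define j_λ(a₀ + a₁) = β(a₀)·1 + λ·j(a₁) (a₀ even, a₁ odd). Then the map k → ∏_{a ∈ A} k[ζ]/(ζ²), λ ↦ (j_λ(a))_{a ∈ A}, is a homeomorphism of k onto its image, and its image is a closed subset of the product space ∏_{a ∈ A} k[ζ]/(ζ²) (where k[ζ]/(ζ²) ≅ k × k carries the product topology and the infinite product carries the Tychonoff product topology).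 -/
open ExteriorAlgebra

/-- The Grassmann algebra `∧(q)` over `k`: the exterior algebra of `k^q`. -/
noncomputable abbrev Grassmann (k : Type) [Field k] (q : ℕ) : Type :=
  ExteriorAlgebra k (Fin q → k)

/-- The ℤ/2-grading of the Grassmann algebra by even and odd exterior degrees. -/
noncomputable def grassGrade (k : Type) [Field k] (q : ℕ) (i : ZMod 2) :
    Submodule k (Grassmann k q) :=
  CliffordAlgebra.evenOdd (0 : QuadraticForm k (Fin q → k)) i

/-- The augmentation homomorphism `β : ∧(q) → k`. -/
noncomputable def grassAug (k : Type) [Field k] (q : ℕ) : Grassmann k q →ₐ[k] k :=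
  ExteriorAlgebra.algebraMapInv

set_option maxHeartbeats 1000000 in
set_option synthInstance.maxHeartbeats 400000 in
/-- Let `k` be a Hausdorff topological field, `A` a graded unital subalgebra of `∧(q)`,
`j : A → k[ζ]/(ζ²)` a surjective parity-preserving homomorphism, and
`J λ = j_λ` the family `j_λ(a₀ + a₁) = β(a₀)·1 + λ·j(a₁)`.  Then `λ ↦ (j_λ(a))_{a ∈ A}`
is a homeomorphism of `k` onto its image and its image is closed in the Tychonoff product
`∏_{a ∈ A} k[ζ]/(ζ²)`, i.e. this map is a closed embedding. -/
theorem stmt8 (k : Type) [Field k] [TopologicalSpace k] [IsTopologicalRing k]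
    [ContinuousInv₀ k] [T2Space k] (q : ℕ)
    (A : Subalgebra k (Grassmann k q))
    (hgraded : ∀ a ∈ A, ∃ a₀ a₁ : Grassmann k q,
      a₀ ∈ A ∧ a₀ ∈ grassGrade k q 0 ∧ a₁ ∈ A ∧ a₁ ∈ grassGrade k q 1 ∧ a = a₀ + a₁)
    (j : A →ₐ[k] DualNumber k)
    (hjsurj : Function.Surjective j)
    (hjpar₀ : ∀ a : A, (a : Grassmann k q) ∈ grassGrade k q 0 →
      TrivSqZeroExt.snd (j a) = 0)
    (hjpar₁ : ∀ a : A, (a : Grassmann k q) ∈ grassGrade k q 1 →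
      TrivSqZeroExt.fst (j a) = 0)
    (J : k → (A →ₐ[k] DualNumber k))
    (hJ : ∀ (lam : k) (a a₀ a₁ : A), (a₀ : Grassmann k q) ∈ grassGrade k q 0 →
      (a₁ : Grassmann k q) ∈ grassGrade k q 1 → a = a₀ + a₁ →
      J lam a = algebraMap k (DualNumber k) (grassAug k q (a₀ : Grassmann k q))
        + lam • j a₁) :
    Topology.IsClosedEmbedding (fun (lam : k) (a : A) => J lam a) := by
  classical
  -- choose a decomposition for each element of A
  choose a₀ a₁ h₀A h₀ h₁A h₁ hsum using fun a : A => hgraded a a.2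
  set A₀ : A → A := fun a => ⟨a₀ a, h₀A a⟩ with hA₀
  set A₁ : A → A := fun a => ⟨a₁ a, h₁A a⟩ with hA₁
  have hdecomp : ∀ a : A, a = A₀ a + A₁ a := fun a => Subtype.ext (hsum a)
  have key : ∀ (lam : k) (a : A),
      J lam a = algebraMap k (DualNumber k) (grassAug k q (a₀ a))
        + lam • j (A₁ a) :=
    fun lam a => hJ lam a (A₀ a) (A₁ a) (h₀ a) (h₁ a) (hdecomp a)
  have keysnd : ∀ (lam : k) (a : A),
      TrivSqZeroExt.snd (J lam a) = lam * TrivSqZeroExt.snd (j (A₁ a)) := by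
    intro lam a
    rw [key lam a]
    rw [TrivSqZeroExt.snd_add, TrivSqZeroExt.snd_smul, TrivSqZeroExt.algebraMap_eq_inl',
      TrivSqZeroExt.snd_inl, zero_add, smul_eq_mul]
  -- a witness with j b = ε
  obtain ⟨b, hb⟩ := hjsurj (DualNumber.eps)
  have hjb : j (A₀ b) + j (A₁ b) = DualNumber.eps := by
    rw [← map_add, ← hdecomp b, hb]
  have hsndb : TrivSqZeroExt.snd (j (A₁ b)) = 1 := by
    have := congrArg TrivSqZeroExt.snd hjb
    rw [TrivSqZeroExt.snd_add, hjpar₀ (A₀ b) (h₀ b), zero_add, DualNumber.snd_eps] at this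
    exact this
  have hJb : ∀ lam : k, TrivSqZeroExt.snd (J lam b) = lam := by
    intro lam; rw [keysnd lam b, hsndb, mul_one]
  -- the continuous left inverse
  set g : (A → DualNumber k) → k := fun p => TrivSqZeroExt.snd (p b) with hg
  have hgcont : Continuous g :=
    TrivSqZeroExt.continuous_snd.comp (continuous_apply b)
  have hfcont : Continuous (fun (lam : k) (a : A) => J lam a) := by
    apply continuous_pi
    intro a
    have : (fun lam : k => (J lam a : DualNumber k)) =
        fun lam : k => algebraMap k (DualNumber k) (grassAug k q (a₀ a))
          + lam • j (A₁ a) := by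
      funext lam; exact key lam a
    rw [this]
    exact continuous_const.add (continuous_id.smul continuous_const)
  have hli : Function.LeftInverse g (fun (lam : k) (a : A) => J lam a) := by
    intro lam; exact hJb lam
  refine ⟨hli.isEmbedding hgcont hfcont, ?_⟩
  have hrange : Set.range (fun (lam : k) (a : A) => J lam a) =
      ⋂ a : A, {p : A → DualNumber k |
        p a = algebraMap k (DualNumber k) (grassAug k q (a₀ a))
          + TrivSqZeroExt.snd (p b) • j (A₁ a)} := by
    ext p
    simp only [Set.mem_range, Set.mem_iInter, Set.mem_setOf_eq]
    constructor
    · rintro ⟨lam, rfl⟩ a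
      rw [hJb lam]
      exact key lam a
    · intro h
      refine ⟨TrivSqZeroExt.snd (p b), ?_⟩
      funext a
      exact (key _ a).trans (h a).symm
  rw [hrange]
  refine isClosed_iInter fun a => isClosed_eq (continuous_apply a) ?_
  exact continuous_const.add
    (Continuous.smul (f := fun p : A → DualNumber k => TrivSqZeroExt.snd (p b))
      (TrivSqZeroExt.continuous_snd.comp (continuous_apply b)) continuous_const)
end

section
/- Let k be a Hausdorff topological field that is not compact, q a natural number, and A a graded unital subalgebra of the Grassmann algebra ∧(q) over k whose odd sector is nontrivial. Then the set of all parity-preserving unital k-algebra homomorphisms from A to the dual numbers k[ζ]/(ζ²), equipped with the topology of pointwise convergence (i.e. the subspace topology inherited from the Tychonoff product ∏_{a ∈ A} k[ζ]/(ζ²), where k[ζ]/(ζ²) ≅ k × k carries the product topology), is not a compact topological space. -/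
open ExteriorAlgebra

section Aux

variable (k : Type) [Field k] (q : ℕ)

noncomputable instance grassGrade.instGradedAlgebra : GradedAlgebra (grassGrade k q) :=
  CliffordAlgebra.gradedAlgebra _

/-- The ℕ-grading by exterior degree. -/
noncomputable abbrev ndeg : ℕ → Submodule k (Grassmann k q) := fun i => ⋀[k]^i (Fin q → k)

noncomputable instance ndeg.instGradedAlgebra : GradedAlgebra (ndeg k q) :=
  ExteriorAlgebra.gradedAlgebra k (Fin q → k)

/-- The augmentation homomorphism. -/
noncomputable def eps : Grassmann k q →ₐ[k] k := ExteriorAlgebra.algebraMapInv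

lemma eps_algebraMap (c : k) : eps k q (algebraMap k (Grassmann k q) c) = c :=
  ExteriorAlgebra.algebraMap_leftInverse _ c

/-- Projection onto the degree-`n` component (ℕ-grading). -/
noncomputable def pj (n : ℕ) (z : Grassmann k q) : Grassmann k q :=
  (DirectSum.decompose (ndeg k q) z n : ndeg k q n)

/-- Projection onto the even/odd component. -/
noncomputable def pE (i : ZMod 2) (z : Grassmann k q) : Grassmann k q :=
  (DirectSum.decompose (grassGrade k q) z i : grassGrade k q i)

/-- The submodule of elements of exterior degree at least `p`. -/
noncomputable def FF (p : ℕ) : Submodule k (Grassmann k q) :=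
  ⨆ i : { i : ℕ // p ≤ i }, ndeg k q i.1

lemma eps_pow (n : ℕ) (hn : n ≠ 0) : ∀ z ∈ ndeg k q n, eps k q z = 0 := by
  obtain ⟨m, rfl⟩ := Nat.exists_eq_succ_of_ne_zero hn
  intro z hz
  have hz' : z ∈ LinearMap.range (ι k (M := Fin q → k)) ^ m *
      LinearMap.range (ι k (M := Fin q → k)) := by
    rw [← pow_succ]; exact hz
  refine Submodule.mul_induction_on hz' (fun x hx y hy => ?_)
    (fun x y hx hy => by rw [map_add, hx, hy, add_zero])
  obtain ⟨v, rfl⟩ := hy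
  have hv : eps k q (ι k v) = 0 := by
    simp [eps, ExteriorAlgebra.algebraMapInv, ExteriorAlgebra.lift_ι_apply]
  rw [map_mul, hv, mul_zero]

lemma eps_odd : ∀ z ∈ grassGrade k q 1, eps k q z = 0 := by
  intro z hz
  rw [grassGrade, CliffordAlgebra.evenOdd] at hz
  refine Submodule.iSup_induction _ (motive := fun z => eps k q z = 0) hz
    (fun j x hx => ?_) (map_zero _) (fun x y hx hy => by
      show eps k q (x + y) = 0
      rw [map_add, show eps k q x = 0 from hx, show eps k q y = 0 from hy, add_zero])
  have hj : (j : ℕ) ≠ 0 := by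
    intro h
    have := j.2
    rw [h] at this
    simp at this
  exact eps_pow k q j hj x hx

lemma pj_add (n : ℕ) (z w : Grassmann k q) : pj k q n (z + w) = pj k q n z + pj k q n w := by
  simp only [pj, DirectSum.decompose_add, DirectSum.add_apply, Submodule.coe_add]

lemma pj_zero (n : ℕ) : pj k q n (0 : Grassmann k q) = 0 := by
  simp only [pj, DirectSum.decompose_zero, DirectSum.zero_apply, ZeroMemClass.coe_zero]

lemma pj_smul (n : ℕ) (c : k) (z : Grassmann k q) :
    pj k q n (c • z) = c • pj k q n z := by
  simp only [pj, DirectSum.decompose_smul, DirectSum.smul_apply, SetLike.val_smul]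

lemma pj0_eq (z : Grassmann k q) : pj k q 0 z = algebraMap k (Grassmann k q) (eps k q z) := by
  refine DirectSum.Decomposition.inductionOn (ndeg k q)
    (motive := fun z => pj k q 0 z = algebraMap k (Grassmann k q) (eps k q z)) ?_ ?_ ?_ z
  · simp [pj_zero]
  · intro i m
    by_cases hi : i = 0
    · subst hi
      have h1 : (m : Grassmann k q) ∈ (1 : Submodule k (Grassmann k q)) := by
        rw [← pow_zero (LinearMap.range (ι k (M := Fin q → k)))]
        exact m.2
      obtain ⟨c, hc⟩ := Submodule.mem_one.mp h1
      rw [pj, DirectSum.decompose_of_mem_same _ m.2, ← hc, eps_algebraMap]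
    · rw [pj, DirectSum.decompose_of_mem_ne _ m.2 hi, eps_pow k q i hi _ m.2, map_zero]
  · intro a b ha hb
    rw [pj_add, ha, hb, map_add, map_add]

lemma mem_FF {i p : ℕ} (h : p ≤ i) {z : Grassmann k q} (hz : z ∈ ndeg k q i) :
    z ∈ FF k q p :=
  (le_iSup (fun i : { i : ℕ // p ≤ i } => ndeg k q i.1) ⟨i, h⟩) hz

lemma pj_FF {p n : ℕ} (hn : n < p) {z : Grassmann k q} (hz : z ∈ FF k q p) :
    pj k q n z = 0 := by
  refine Submodule.iSup_induction _ (motive := fun z => pj k q n z = 0) hz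
    (fun j x hx => ?_) (pj_zero k q n) (fun x y hx hy => by
      show pj k q n (x + y) = 0
      rw [pj_add, show pj k q n x = 0 from hx, show pj k q n y = 0 from hy, add_zero])
  have hjn : (j : ℕ) ≠ n := by have := j.2; omega
  exact DirectSum.decompose_of_mem_ne _ hx hjn

lemma FF_of_pj {p : ℕ} {z : Grassmann k q} (h : ∀ n < p, pj k q n z = 0) :
    z ∈ FF k q p := by
  classical
  rw [← DirectSum.sum_support_decompose (ndeg k q) z]
  refine Submodule.sum_mem _ fun i _ => ?_
  rcases le_or_gt p i with hpi | hpi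
  · exact mem_FF k q hpi (SetLike.coe_mem _)
  · rw [show ((DirectSum.decompose (ndeg k q) z i : ndeg k q i) : Grassmann k q)
      = pj k q i z from rfl, h i hpi]
    exact Submodule.zero_mem _

lemma FF_mul {p r : ℕ} {z w : Grassmann k q} (hz : z ∈ FF k q p) (hw : w ∈ FF k q r) :
    z * w ∈ FF k q (p + r) := by
  have hle : FF k q p * FF k q r ≤ FF k q (p + r) := by
    simp only [FF]
    rw [Submodule.iSup_mul]
    refine iSup_le fun i => ?_
    rw [Submodule.mul_iSup]
    refine iSup_le fun j => ?_
    have hij : ndeg k q i.1 * ndeg k q j.1 = ndeg k q (i.1 + j.1) := by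
      show LinearMap.range (ι k (M := Fin q → k)) ^ (i : ℕ) *
        LinearMap.range (ι k (M := Fin q → k)) ^ (j : ℕ) = _ ^ ((i : ℕ) + (j : ℕ))
      rw [pow_add]
    rw [hij]
    exact le_iSup (fun t : { t : ℕ // p + r ≤ t } => ndeg k q t.1) ⟨i.1 + j.1, add_le_add i.2 j.2⟩
  exact hle (Submodule.mul_mem_mul hz hw)

lemma pE_same {i : ZMod 2} {z : Grassmann k q} (hz : z ∈ grassGrade k q i) :
    pE k q i z = z :=
  DirectSum.decompose_of_mem_same _ hz

lemma pE_ne {i j : ZMod 2} {z : Grassmann k q} (hz : z ∈ grassGrade k q i) (hij : i ≠ j) :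
    pE k q j z = 0 :=
  DirectSum.decompose_of_mem_ne _ hz hij

lemma pE_add (i : ZMod 2) (z w : Grassmann k q) :
    pE k q i (z + w) = pE k q i z + pE k q i w := by
  simp only [pE, DirectSum.decompose_add, DirectSum.add_apply, Submodule.coe_add]

lemma pE_zero (i : ZMod 2) : pE k q i (0 : Grassmann k q) = 0 := by
  simp only [pE, DirectSum.decompose_zero, DirectSum.zero_apply, ZeroMemClass.coe_zero]

end Aux

set_option maxHeartbeats 4000000 in
set_option synthInstance.maxHeartbeats 1000000 in
/-- Let `k` be a Hausdorff topological field that is not compact, and let `A` be a graded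
unital subalgebra of `∧(q)` with nontrivial odd sector.  Then the set of parity-preserving
unital `k`-algebra homomorphisms `A → k[ζ]/(ζ²)`, with the topology of pointwise
convergence (the subspace topology from the Tychonoff product `∏_{a ∈ A} k[ζ]/(ζ²)`),
is not compact. -/
theorem stmt9 (k : Type) [Field k] [TopologicalSpace k] [IsTopologicalRing k]
    [ContinuousInv₀ k] [T2Space k] [NoncompactSpace k] (q : ℕ)
    (A : Subalgebra k (Grassmann k q))
    (hgraded : ∀ a ∈ A, ∃ a₀ a₁ : Grassmann k q,
      a₀ ∈ A ∧ a₀ ∈ grassGrade k q 0 ∧ a₁ ∈ A ∧ a₁ ∈ grassGrade k q 1 ∧ a = a₀ + a₁)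
    (hodd : ∃ a : Grassmann k q, a ∈ A ∧ a ∈ grassGrade k q 1 ∧ a ≠ 0) :
    ¬ IsCompact {f : A → DualNumber k | ∃ φ : A →ₐ[k] DualNumber k,
        (∀ a : A, (a : Grassmann k q) ∈ grassGrade k q 0 →
          TrivSqZeroExt.snd (φ a) = 0) ∧
        (∀ a : A, (a : Grassmann k q) ∈ grassGrade k q 1 →
          TrivSqZeroExt.fst (φ a) = 0) ∧
        ⇑φ = f} := by
  classical
  obtain ⟨a, haA, ha1, ha0⟩ := hodd
  -- the minimal exterior degree appearing among odd elements of A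
  set N : Set ℕ := {n | ∃ x : Grassmann k q, x ∈ A ∧ x ∈ grassGrade k q 1 ∧ pj k q n x ≠ 0}
    with hN
  have hNne : N.Nonempty := by
    have hex : ∃ n, pj k q n a ≠ 0 := by
      by_contra h
      push_neg at h
      apply ha0
      rw [← DirectSum.sum_support_decompose (ndeg k q) a]
      exact Finset.sum_eq_zero fun i _ => h i
    obtain ⟨n, hn⟩ := hex
    exact ⟨n, a, haA, ha1, hn⟩
  set m := sInf N with hm
  obtain ⟨b, hbA, hb1, hbm⟩ : m ∈ N := Nat.sInf_mem hNne
  have hmin : ∀ y ∈ A, y ∈ grassGrade k q 1 → ∀ n < m, pj k q n y = 0 := by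
    intro y hyA hy1 n hn
    by_contra h
    exact Nat.notMem_of_lt_sInf hn ⟨y, hyA, hy1, h⟩
  -- the subspace that the point derivation has to kill
  set S : Submodule k (Grassmann k q) := Submodule.span k
    {z | ∃ r y : Grassmann k q, r ∈ grassGrade k q 0 ∧ eps k q r = 0 ∧ y ∈ A ∧
      y ∈ grassGrade k q 1 ∧ (z = r * y ∨ z = y * r)} with hSdef
  have hS : ∀ z ∈ S, pj k q m z = 0 := by
    intro z hz
    induction hz using Submodule.span_induction with
    | mem z hzmem =>
      obtain ⟨r, y, hr0, hre, hyA, hy1, hz⟩ := hzmem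
      have hrF : r ∈ FF k q 1 := by
        refine FF_of_pj k q fun n hn => ?_
        obtain rfl : n = 0 := by omega
        rw [pj0_eq, hre, map_zero]
      have hyF : y ∈ FF k q m := FF_of_pj k q fun n hn => hmin y hyA hy1 n hn
      rcases hz with rfl | rfl
      · exact pj_FF k q (by omega) (FF_mul k q hrF hyF)
      · exact pj_FF k q (by omega) (FF_mul k q hyF hrF)
    | zero => exact pj_zero k q m
    | add x y _ _ hx hy => rw [pj_add, hx, hy, add_zero]
    | smul c x _ hx => rw [pj_smul, hx, smul_zero]
  -- b is not in S, so there is a linear functional D killing S with D b = 1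
  have hbS : b ∉ S := fun h => hbm (hS b h)
  obtain ⟨D, hDb, hDS⟩ : ∃ D : Grassmann k q →ₗ[k] k, D b = 1 ∧ ∀ z ∈ S, D z = 0 := by
    have hb' : Submodule.Quotient.mk (p := S) b ≠ 0 := fun h =>
      hbS ((Submodule.Quotient.mk_eq_zero _).mp h)
    obtain ⟨g, hg⟩ : ∃ g : Module.Dual k (Grassmann k q ⧸ S),
        g (Submodule.Quotient.mk b) ≠ 0 := by
      by_contra h
      push_neg at h
      exact hb' ((Module.forall_dual_apply_eq_zero_iff k _).mp h)
    refine ⟨(g (Submodule.Quotient.mk (p := S) b))⁻¹ • (g ∘ₗ S.mkQ), ?_, ?_⟩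
    · simp only [LinearMap.smul_apply, LinearMap.comp_apply, Submodule.mkQ_apply,
        smul_eq_mul]
      exact inv_mul_cancel₀ hg
    · intro z hz
      simp only [LinearMap.smul_apply, LinearMap.comp_apply, Submodule.mkQ_apply,
        smul_eq_mul]
      rw [(Submodule.Quotient.mk_eq_zero S).mpr hz, map_zero, mul_zero]
  -- the even/odd decomposition of elements of A
  have hdec : ∀ x : A, pE k q 0 (x : Grassmann k q) ∈ A ∧
      pE k q 0 (x : Grassmann k q) ∈ grassGrade k q 0 ∧
      pE k q 1 (x : Grassmann k q) ∈ A ∧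
      pE k q 1 (x : Grassmann k q) ∈ grassGrade k q 1 ∧
      (x : Grassmann k q) = pE k q 0 (x : Grassmann k q) + pE k q 1 (x : Grassmann k q) := by
    intro x
    obtain ⟨a₀, a₁, h0A, h00, h1A, h11, hsum⟩ := hgraded x x.2
    have e0 : pE k q 0 (x : Grassmann k q) = a₀ := by
      rw [hsum, pE_add, pE_same k q h00, pE_ne k q h11 (by decide), add_zero]
    have e1 : pE k q 1 (x : Grassmann k q) = a₁ := by
      rw [hsum, pE_add, pE_ne k q h00 (by decide), pE_same k q h11, zero_add]
    rw [e0, e1]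
    exact ⟨h0A, h00, h1A, h11, hsum⟩
  -- the key derivation identity
  have hDmul : ∀ x0 y1 : Grassmann k q, x0 ∈ grassGrade k q 0 → y1 ∈ A →
      y1 ∈ grassGrade k q 1 →
      D (x0 * y1) = eps k q x0 * D y1 ∧ D (y1 * x0) = eps k q x0 * D y1 := by
    intro x0 y1 hx0 hy1A hy11
    set c := eps k q x0 with hc
    set r := x0 - algebraMap k (Grassmann k q) c with hr
    have hr0 : r ∈ grassGrade k q 0 :=
      sub_mem hx0 (SetLike.algebraMap_mem_graded (grassGrade k q) c)
    have hre : eps k q r = 0 := by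
      rw [hr, map_sub, eps_algebraMap, sub_self]
    have hmem1 : r * y1 ∈ S := Submodule.subset_span ⟨r, y1, hr0, hre, hy1A, hy11, Or.inl rfl⟩
    have hmem2 : y1 * r ∈ S := Submodule.subset_span ⟨r, y1, hr0, hre, hy1A, hy11, Or.inr rfl⟩
    have hsplit : x0 = algebraMap k (Grassmann k q) c + r := by rw [hr]; abel
    constructor
    · rw [hsplit, add_mul, map_add, hDS _ hmem1, add_zero,
        show algebraMap k (Grassmann k q) c * y1 = c • y1 from (Algebra.smul_def c y1).symm,
        map_smul, smul_eq_mul]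
    · rw [hsplit, mul_add, map_add, hDS _ hmem2, add_zero,
        show y1 * algebraMap k (Grassmann k q) c = c • y1 by
          rw [Algebra.smul_def c y1, Algebra.commutes],
        map_smul, smul_eq_mul]
  -- eps of an element of A is the eps of its even part
  have heps : ∀ x : A, eps k q (x : Grassmann k q) = eps k q (pE k q 0 (x : Grassmann k q)) := by
    intro x
    obtain ⟨_, _, _, h11, hsum⟩ := hdec x
    conv_lhs => rw [hsum]
    rw [map_add, eps_odd k q _ h11, add_zero]
  -- the family of parity-preserving homomorphisms
  have hfam : ∀ t : k, ∃ φ : A →ₐ[k] DualNumber k,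
      (∀ a : A, (a : Grassmann k q) ∈ grassGrade k q 0 → TrivSqZeroExt.snd (φ a) = 0) ∧
      (∀ a : A, (a : Grassmann k q) ∈ grassGrade k q 1 → TrivSqZeroExt.fst (φ a) = 0) ∧
      TrivSqZeroExt.snd (φ ⟨b, hbA⟩) = t := by
    intro t
    have hone : TrivSqZeroExt.inl (eps k q ((1 : A) : Grassmann k q)) +
        TrivSqZeroExt.inr (t * D (pE k q 1 ((1 : A) : Grassmann k q))) = 1 := by
      have h1 : pE k q 1 ((1 : A) : Grassmann k q) = 0 :=
        pE_ne k q (SetLike.one_mem_graded (grassGrade k q)) (by decide)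
      rw [h1, map_zero, mul_zero, TrivSqZeroExt.inr_zero, add_zero,
        Subalgebra.coe_one A, map_one, TrivSqZeroExt.inl_one]
    have hmul : ∀ x y : A,
        TrivSqZeroExt.inl (eps k q ((x * y : A) : Grassmann k q)) +
          TrivSqZeroExt.inr (t * D (pE k q 1 ((x * y : A) : Grassmann k q))) =
        (TrivSqZeroExt.inl (eps k q (x : Grassmann k q)) +
          TrivSqZeroExt.inr (t * D (pE k q 1 (x : Grassmann k q)))) *
        (TrivSqZeroExt.inl (eps k q (y : Grassmann k q)) +
          TrivSqZeroExt.inr (t * D (pE k q 1 (y : Grassmann k q)))) := by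
      intro x y
      obtain ⟨hx0A, hx00, hx1A, hx11, hxsum⟩ := hdec x
      obtain ⟨hy0A, hy00, hy1A, hy11, hysum⟩ := hdec y
      set x0 := pE k q 0 (x : Grassmann k q)
      set x1 := pE k q 1 (x : Grassmann k q)
      set y0 := pE k q 0 (y : Grassmann k q)
      set y1 := pE k q 1 (y : Grassmann k q)
      have hmule : x0 * y0 + x1 * y1 ∈ grassGrade k q 0 := by
        refine add_mem ?_ ?_
        · have := SetLike.mul_mem_graded hx00 hy00
          rwa [show (0 + 0 : ZMod 2) = 0 by decide] at this
        · have := SetLike.mul_mem_graded hx11 hy11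
          rwa [show (1 + 1 : ZMod 2) = 0 by decide] at this
      have hmulo : x0 * y1 + x1 * y0 ∈ grassGrade k q 1 := by
        refine add_mem ?_ ?_
        · have := SetLike.mul_mem_graded hx00 hy11
          rwa [show (0 + 1 : ZMod 2) = 1 by decide] at this
        · have := SetLike.mul_mem_graded hx11 hy00
          rwa [show (1 + 0 : ZMod 2) = 1 by decide] at this
      have hprod : ((x * y : A) : Grassmann k q) =
          (x0 * y0 + x1 * y1) + (x0 * y1 + x1 * y0) := by
        have hc : ((x * y : A) : Grassmann k q) =
            (x0 + x1) * (y0 + y1) := by rw [← hxsum, ← hysum]; norm_cast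
        rw [hc]
        noncomm_ring
      have hpE1 : pE k q 1 ((x * y : A) : Grassmann k q) = x0 * y1 + x1 * y0 := by
        rw [hprod, pE_add, pE_ne k q hmule (by decide), pE_same k q hmulo, zero_add]
      refine TrivSqZeroExt.ext ?_ ?_
      · simp only [TrivSqZeroExt.fst_add, TrivSqZeroExt.fst_inl, TrivSqZeroExt.fst_inr,
          TrivSqZeroExt.fst_mul, add_zero]
        rw [Subalgebra.coe_mul A x y, map_mul]
      · simp only [TrivSqZeroExt.snd_add, TrivSqZeroExt.snd_inl, TrivSqZeroExt.snd_inr,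
          TrivSqZeroExt.snd_mul, TrivSqZeroExt.fst_add, TrivSqZeroExt.fst_inl,
          TrivSqZeroExt.fst_inr, zero_add, add_zero, op_smul_eq_smul,
          smul_eq_mul]
        rw [hpE1, map_add, (hDmul x0 y1 hx00 hy1A hy11).1, (hDmul y0 x1 hy00 hx1A hx11).2,
          heps x, heps y]
        ring
    have hzero : TrivSqZeroExt.inl (eps k q ((0 : A) : Grassmann k q)) +
        TrivSqZeroExt.inr (t * D (pE k q 1 ((0 : A) : Grassmann k q))) = 0 := by
      rw [Subalgebra.coe_zero A, pE_zero, map_zero, map_zero, mul_zero,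
        TrivSqZeroExt.inl_zero, TrivSqZeroExt.inr_zero, add_zero]
    have haddf : ∀ x y : A,
        TrivSqZeroExt.inl (eps k q ((x + y : A) : Grassmann k q)) +
          TrivSqZeroExt.inr (t * D (pE k q 1 ((x + y : A) : Grassmann k q))) =
        (TrivSqZeroExt.inl (eps k q (x : Grassmann k q)) +
          TrivSqZeroExt.inr (t * D (pE k q 1 (x : Grassmann k q)))) +
        (TrivSqZeroExt.inl (eps k q (y : Grassmann k q)) +
          TrivSqZeroExt.inr (t * D (pE k q 1 (y : Grassmann k q)))) := by
      intro x y
      have hadd : pE k q 1 ((x + y : A) : Grassmann k q) =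
          pE k q 1 (x : Grassmann k q) + pE k q 1 (y : Grassmann k q) := by
        rw [Subalgebra.coe_add A x y, pE_add]
      refine TrivSqZeroExt.ext ?_ ?_
      · simp only [TrivSqZeroExt.fst_add, TrivSqZeroExt.fst_inl, TrivSqZeroExt.fst_inr,
          add_zero]
        rw [Subalgebra.coe_add A x y, map_add]
      · simp only [TrivSqZeroExt.snd_add, TrivSqZeroExt.snd_inl, TrivSqZeroExt.snd_inr,
          zero_add, add_zero]
        rw [hadd, map_add, mul_add]
    have hcomm : ∀ c : k,
        TrivSqZeroExt.inl (eps k q ((algebraMap k A c : A) : Grassmann k q)) +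
          TrivSqZeroExt.inr (t * D (pE k q 1 ((algebraMap k A c : A) : Grassmann k q))) =
        algebraMap k (DualNumber k) c := by
      intro c
      have h0 : pE k q 1 ((algebraMap k A c : A) : Grassmann k q) = 0 := by
        rw [Subalgebra.coe_algebraMap]
        exact pE_ne k q (SetLike.algebraMap_mem_graded (grassGrade k q) c) (by decide)
      have h1 : eps k q ((algebraMap k A c : A) : Grassmann k q) = c := by
        rw [Subalgebra.coe_algebraMap]
        exact eps_algebraMap k q c
      rw [h0, h1, map_zero, mul_zero, TrivSqZeroExt.inr_zero, add_zero,
        TrivSqZeroExt.algebraMap_eq_inl]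
    refine ⟨AlgHom.mk (RingHom.mk (MonoidHom.mk (OneHom.mk
      (fun x : A => TrivSqZeroExt.inl (eps k q (x : Grassmann k q)) +
        TrivSqZeroExt.inr (t * D (pE k q 1 (x : Grassmann k q)))) hone) hmul) hzero haddf)
      hcomm, ?_, ?_, ?_⟩
    · intro x hx
      have h1 : pE k q 1 (x : Grassmann k q) = 0 := pE_ne k q hx (by decide)
      show TrivSqZeroExt.snd (TrivSqZeroExt.inl (eps k q (x : Grassmann k q)) +
        TrivSqZeroExt.inr (t * D (pE k q 1 (x : Grassmann k q)))) = 0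
      rw [h1, map_zero, mul_zero, TrivSqZeroExt.inr_zero, add_zero, TrivSqZeroExt.snd_inl]
    · intro x hx
      have h1 : eps k q (x : Grassmann k q) = 0 := eps_odd k q _ hx
      show TrivSqZeroExt.fst (TrivSqZeroExt.inl (eps k q (x : Grassmann k q)) +
        TrivSqZeroExt.inr (t * D (pE k q 1 (x : Grassmann k q)))) = 0
      rw [h1, TrivSqZeroExt.inl_zero, zero_add, TrivSqZeroExt.fst_inr]
    · have hpb : pE k q 1 ((⟨b, hbA⟩ : A) : Grassmann k q) = b := pE_same k q hb1
      show TrivSqZeroExt.snd (TrivSqZeroExt.inl (eps k q ((⟨b, hbA⟩ : A) : Grassmann k q)) +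
        TrivSqZeroExt.inr (t * D (pE k q 1 ((⟨b, hbA⟩ : A) : Grassmann k q)))) = t
      rw [hpb, hDb, mul_one, TrivSqZeroExt.snd_add, TrivSqZeroExt.snd_inl,
        TrivSqZeroExt.snd_inr, zero_add]
  -- conclude non-compactness
  intro hK
  have hcont : Continuous fun f : A → DualNumber k =>
      TrivSqZeroExt.snd (f ⟨b, hbA⟩) :=
    TrivSqZeroExt.continuous_snd.comp (continuous_apply _)
  have himg := hK.image hcont
  have huniv : ∀ t : k, t ∈ (fun f : A → DualNumber k => TrivSqZeroExt.snd (f ⟨b, hbA⟩)) ''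
      {f : A → DualNumber k | ∃ φ : A →ₐ[k] DualNumber k,
        (∀ a : A, (a : Grassmann k q) ∈ grassGrade k q 0 →
          TrivSqZeroExt.snd (φ a) = 0) ∧
        (∀ a : A, (a : Grassmann k q) ∈ grassGrade k q 1 →
          TrivSqZeroExt.fst (φ a) = 0) ∧
        ⇑φ = f} := by
    intro t
    obtain ⟨φ, h0, h1, hval⟩ := hfam t
    exact ⟨⇑φ, ⟨φ, h0, h1, rfl⟩, hval⟩
  rw [Set.eq_univ_of_forall huniv] at himg
  exact noncompact_univ k himg
end

section
/- Let k be a topological field (with continuous addition, multiplication and inversion) and p, q natural numbers. Topologize ∧(q) as a finite-dimensional k-vector space (product topology via a monomial basis), give the set Hom_gr(∧(p), ∧(q)) of all parity-preserving unital k-algebra homomorphisms ∧(p) → ∧(q) the topology of pointwise convergence (the subspace topology from the product ∧(q)^{∧(p)}), and give (∧(q)₁)^p the product topology. Then the bijection φ ↦ (φ(ξ₁), …, φ(ξ_p)), where ξ₁, …, ξ_p are the standard odd generators of ∧(p), is a homeomorphism from Hom_gr(∧(p), ∧(q)) onto (∧(q)₁)^p. -/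
open ExteriorAlgebra

/-- A unital algebra homomorphism between Grassmann algebras is parity-preserving if it
maps even elements to even elements and odd elements to odd elements. -/
def IsParityHom {k : Type} [Field k] {p q : ℕ} (φ : Grassmann k p →ₐ[k] Grassmann k q) :
    Prop :=
  ∀ (i : ZMod 2) (x : Grassmann k p), x ∈ grassGrade k p i → φ x ∈ grassGrade k q i

/-- The standard odd generators `ξ₁, …, ξ_p` of `∧(p)`. -/
noncomputable def xi (k : Type) [Field k] (p : ℕ) (i : Fin p) : Grassmann k p :=
  ExteriorAlgebra.ι k (Pi.single i (1 : k))

theorem xi_mem_odd (k : Type) [Field k] (p : ℕ) (i : Fin p) :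
    xi k p i ∈ grassGrade k p 1 :=
  CliffordAlgebra.ι_mem_evenOdd_one _ _

/-- The topology on `∧(q)` as a finite-dimensional `k`-vector space over the topological
field `k`: the product topology transported along the coordinates of a basis. -/
noncomputable def grassTopology (k : Type) [Field k] [TopologicalSpace k] (q : ℕ) :
    TopologicalSpace (Grassmann k q) :=
  TopologicalSpace.induced
    (fun v i => (Module.Basis.ofVectorSpace k (Grassmann k q)).repr v i) Pi.topologicalSpace

/-! ### Auxiliary algebraic lemmas -/

section Alg

variable {k : Type} [Field k] {p q : ℕ}

lemma grass_flip {a b : Grassmann k q} (h : a = -b) : b = -a := by rw [h, neg_neg]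

lemma grass_gen_anticomm (a b : Fin q → k) :
    ExteriorAlgebra.ι k a * ExteriorAlgebra.ι k b
      = -(ExteriorAlgebra.ι k b * ExteriorAlgebra.ι k a) :=
  CliffordAlgebra.ι_mul_ι_comm_of_isOrtho (by simp [QuadraticMap.IsOrtho])

lemma grass_sandwich {a b x y : Grassmann k q}
    (ha : y * a = -(a * y)) (hb : y * b = -(b * y)) (hx : y * x = -(x * y)) :
    y * (a * b * x) = -((a * b * x) * y) := by
  calc y * (a * b * x) = (y * a) * (b * x) := by simp only [mul_assoc]
    _ = -(a * ((y * b) * x)) := by rw [ha]; simp only [neg_mul, mul_assoc]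
    _ = -(a * ((-(b * y)) * x)) := by rw [hb]
    _ = a * (b * (y * x)) := by simp only [neg_mul, mul_neg, neg_neg, mul_assoc]
    _ = a * (b * (-(x * y))) := by rw [hx]
    _ = -((a * b * x) * y) := by simp only [neg_mul, mul_neg, neg_neg, mul_assoc]

lemma grass_odd_anticomm (v : Fin q → k) {y : Grassmann k q}
    (hy : y ∈ grassGrade k q 1) :
    ExteriorAlgebra.ι k v * y = -(y * ExteriorAlgebra.ι k v) := by
  unfold grassGrade at hy
  induction y, hy using CliffordAlgebra.odd_induction with
  | ι w => exact grass_gen_anticomm v w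
  | add x z hx hz ihx ihz => rw [mul_add, add_mul, ihx, ihz, neg_add]
  | ι_mul_ι_mul m₁ m₂ x hx ih =>
    exact grass_sandwich (grass_gen_anticomm v m₁) (grass_gen_anticomm v m₂) ih

lemma grass_odd_odd_anticomm {y z : Grassmann k q}
    (hy : y ∈ grassGrade k q 1) (hz : z ∈ grassGrade k q 1) :
    y * z = -(z * y) := by
  unfold grassGrade at hz
  induction z, hz using CliffordAlgebra.odd_induction with
  | ι w => exact grass_flip (grass_odd_anticomm w hy)
  | add x z hx hz ihx ihz => rw [mul_add, add_mul, ihx, ihz, neg_add]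
  | ι_mul_ι_mul m₁ m₂ x hx ih =>
    exact grass_sandwich (grass_flip (grass_odd_anticomm m₁ hy))
      (grass_flip (grass_odd_anticomm m₂ hy)) ih

lemma grass_odd_sq_zero {y : Grassmann k q} (hy : y ∈ grassGrade k q 1) :
    y * y = 0 := by
  unfold grassGrade at hy
  induction y, hy using CliffordAlgebra.odd_induction with
  | ι w => exact ExteriorAlgebra.ι_sq_zero w
  | add x z hx hz ihx ihz =>
    have hanti : x * z = -(z * x) := grass_odd_odd_anticomm hx hz
    rw [add_mul, mul_add, mul_add, ihx, ihz, hanti]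
    abel
  | ι_mul_ι_mul m₁ m₂ x hx ih =>
    have h : x * (ExteriorAlgebra.ι k m₁ * ExteriorAlgebra.ι k m₂ * x)
        = -((ExteriorAlgebra.ι k m₁ * ExteriorAlgebra.ι k m₂ * x) * x) :=
      grass_sandwich (grass_flip (grass_odd_anticomm m₁ hx))
        (grass_flip (grass_odd_anticomm m₂ hx)) (by rw [ih, neg_zero])
    have h2 : (ExteriorAlgebra.ι k m₁ * ExteriorAlgebra.ι k m₂ * x) * x = 0 := by
      rw [mul_assoc, ih, mul_zero]
    calc (ExteriorAlgebra.ι k m₁ * ExteriorAlgebra.ι k m₂ * x)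
          * (ExteriorAlgebra.ι k m₁ * ExteriorAlgebra.ι k m₂ * x)
        = ExteriorAlgebra.ι k m₁ * ExteriorAlgebra.ι k m₂
            * (x * (ExteriorAlgebra.ι k m₁ * ExteriorAlgebra.ι k m₂ * x)) := by
          simp only [mul_assoc]
      _ = ExteriorAlgebra.ι k m₁ * ExteriorAlgebra.ι k m₂
            * (-((ExteriorAlgebra.ι k m₁ * ExteriorAlgebra.ι k m₂ * x) * x)) := by rw [h]
      _ = 0 := by rw [h2, neg_zero, mul_zero]

/-- The linear map `v ↦ ∑ i, v i • y i`. -/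
noncomputable def oddVec (y : Fin p → grassGrade k q 1) :
    (Fin p → k) →ₗ[k] Grassmann k q :=
  ∑ i, (LinearMap.proj i : (Fin p → k) →ₗ[k] k).smulRight (y i : Grassmann k q)

lemma oddVec_apply (y : Fin p → grassGrade k q 1) (v : Fin p → k) :
    oddVec y v = ∑ i, v i • (y i : Grassmann k q) := by
  simp [oddVec]

lemma oddVec_mem (y : Fin p → grassGrade k q 1) (v : Fin p → k) :
    oddVec y v ∈ grassGrade k q 1 := by
  rw [oddVec_apply]
  exact Submodule.sum_mem _ fun i _ => Submodule.smul_mem _ _ (y i).2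

/-- The algebra homomorphism determined by a tuple of odd elements. -/
noncomputable def oddLift (y : Fin p → grassGrade k q 1) :
    Grassmann k p →ₐ[k] Grassmann k q :=
  ExteriorAlgebra.lift k ⟨oddVec y, fun v => grass_odd_sq_zero (oddVec_mem y v)⟩

lemma oddLift_ι (y : Fin p → grassGrade k q 1) (v : Fin p → k) :
    oddLift y (ExteriorAlgebra.ι k v) = oddVec y v := by
  unfold oddLift
  rw [ExteriorAlgebra.lift_ι_apply]

lemma oddLift_xi (y : Fin p → grassGrade k q 1) (i : Fin p) :
    oddLift y (xi k p i) = y i := by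
  rw [xi, oddLift_ι, oddVec_apply]
  simp [Pi.single_apply, ite_smul]

lemma oddLift_even (y : Fin p → grassGrade k q 1) {x : Grassmann k p}
    (hx : x ∈ grassGrade k p 0) : oddLift y x ∈ grassGrade k q 0 := by
  unfold grassGrade at hx ⊢
  induction x, hx using CliffordAlgebra.even_induction with
  | algebraMap r =>
    rw [AlgHom.commutes]
    exact SetLike.algebraMap_mem_graded _ _
  | add x z hx hz ihx ihz => rw [map_add]; exact Submodule.add_mem _ ihx ihz
  | ι_mul_ι_mul m₁ m₂ x hx ih =>
    rw [map_mul, map_mul, oddLift_ι, oddLift_ι]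
    have h1 : oddVec y m₁ ∈ CliffordAlgebra.evenOdd
        (0 : QuadraticForm k (Fin q → k)) 1 := oddVec_mem y m₁
    have h2 : oddVec y m₂ ∈ CliffordAlgebra.evenOdd
        (0 : QuadraticForm k (Fin q → k)) 1 := oddVec_mem y m₂
    have h := SetLike.mul_mem_graded (SetLike.mul_mem_graded h1 h2) ih
    have e : ((1 : ZMod 2) + 1) + 0 = 0 := by decide
    rw [e] at h
    exact h

lemma oddLift_odd (y : Fin p → grassGrade k q 1) {x : Grassmann k p}
    (hx : x ∈ grassGrade k p 1) : oddLift y x ∈ grassGrade k q 1 := by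
  unfold grassGrade at hx ⊢
  induction x, hx using CliffordAlgebra.odd_induction with
  | ι v => rw [oddLift_ι]; exact oddVec_mem y v
  | add x z hx hz ihx ihz => rw [map_add]; exact Submodule.add_mem _ ihx ihz
  | ι_mul_ι_mul m₁ m₂ x hx ih =>
    rw [map_mul, map_mul, oddLift_ι, oddLift_ι]
    have h1 : oddVec y m₁ ∈ CliffordAlgebra.evenOdd
        (0 : QuadraticForm k (Fin q → k)) 1 := oddVec_mem y m₁
    have h2 : oddVec y m₂ ∈ CliffordAlgebra.evenOdd
        (0 : QuadraticForm k (Fin q → k)) 1 := oddVec_mem y m₂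
    have h := SetLike.mul_mem_graded (SetLike.mul_mem_graded h1 h2) ih
    have e : ((1 : ZMod 2) + 1) + 1 = 1 := by decide
    rw [e] at h
    exact h

lemma oddLift_parity (y : Fin p → grassGrade k q 1) : IsParityHom (oddLift y) := by
  intro i x hx
  obtain ⟨v, hv⟩ := i
  interval_cases v
  · exact oddLift_even y hx
  · exact oddLift_odd y hx

lemma grass_algHom_ext {φ ψ : Grassmann k p →ₐ[k] Grassmann k q}
    (h : ∀ i, φ (xi k p i) = ψ (xi k p i)) : φ = ψ := by
  apply ExteriorAlgebra.hom_ext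
  apply (Pi.basisFun k (Fin p)).ext
  intro i
  simpa [xi, Pi.basisFun_apply] using h i

end Alg

/-! ### Finite-dimensionality -/

lemma grass_finiteDimensional (k : Type) [Field k] (q : ℕ) :
    FiniteDimensional k (Grassmann k q) := by
  have hbot : ∀ n : ℕ, q < n →
      (⋀[k]^n (Fin q → k) : Submodule k (Grassmann k q)) = ⊥ := by
    intro n hn
    rw [← ExteriorAlgebra.ιMulti_span_fixedDegree]
    refine le_bot_iff.mp (Submodule.span_le.mpr ?_)
    rintro _ ⟨v, rfl⟩
    have hv : ¬ LinearIndependent k v := by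
      intro h
      have := h.fintype_card_le_finrank
      simp only [Fintype.card_fin, Module.finrank_fin_fun] at this
      omega
    simp [AlternatingMap.map_linearDependent _ v hv]
  have hfg : ∀ n : ℕ, (⋀[k]^n (Fin q → k) : Submodule k (Grassmann k q)).FG := by
    intro n
    refine Submodule.FG.pow ?_ n
    rw [← Submodule.map_top]
    exact (Module.finite_def.mp inferInstance).map _
  have htop : (⊤ : Submodule k (Grassmann k q)) =
      (Finset.range (q + 1)).sup (fun n => (⋀[k]^n (Fin q → k))) := by
    refine le_antisymm ?_ le_top
    rw [← CliffordAlgebra.iSup_ι_range_eq_top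
      (Q := (0 : QuadraticForm k (Fin q → k)))]
    refine iSup_le fun n => ?_
    rcases le_or_gt n q with h | h
    · exact Finset.le_sup (f := fun n => (⋀[k]^n (Fin q → k)))
        (Finset.mem_range.mpr (by omega))
    · rw [show (LinearMap.range (CliffordAlgebra.ι
          (0 : QuadraticForm k (Fin q → k))) ^ n) = (⋀[k]^n (Fin q → k)) from rfl,
        hbot n h]
      exact bot_le
  refine Module.finite_def.mpr ?_
  rw [htop]
  exact Submodule.fg_finset_sup _ _ fun n _ => hfg n

/-! ### Main theorem -/

/-- For a topological field `k`, the bijection `φ ↦ (φ(ξ₁), …, φ(ξ_p))` from the space of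
parity-preserving unital `k`-algebra homomorphisms `∧(p) → ∧(q)` (with the topology of
pointwise convergence) onto `(∧(q)₁)^p` (with the product topology) is a
homeomorphism. -/
theorem stmt19 (k : Type) [Field k] [TopologicalSpace k] [IsTopologicalRing k]
    [ContinuousInv₀ k] (p q : ℕ) :
    letI : TopologicalSpace (Grassmann k q) := grassTopology k q
    letI : TopologicalSpace {φ : Grassmann k p →ₐ[k] Grassmann k q // IsParityHom φ} :=
      TopologicalSpace.induced (fun φ => (⇑φ.1 : Grassmann k p → Grassmann k q))
        Pi.topologicalSpace
    IsHomeomorph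
      (fun (φ : {φ : Grassmann k p →ₐ[k] Grassmann k q // IsParityHom φ})
        (i : Fin p) =>
        (⟨φ.1 (xi k p i), φ.2 1 (xi k p i) (xi_mem_odd k p i)⟩ :
          grassGrade k q 1)) := by
  letI : TopologicalSpace (Grassmann k q) := grassTopology k q
  letI : TopologicalSpace {φ : Grassmann k p →ₐ[k] Grassmann k q // IsParityHom φ} :=
    TopologicalSpace.induced (fun φ => (⇑φ.1 : Grassmann k p → Grassmann k q))
      Pi.topologicalSpace
  haveI : FiniteDimensional k (Grassmann k q) := grass_finiteDimensional k q
  set b := Module.Basis.ofVectorSpace k (Grassmann k q) with hb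
  haveI : Fintype (Module.Basis.ofVectorSpaceIndex k (Grassmann k q)) :=
    FiniteDimensional.fintypeBasisIndex b
  -- the coordinate map as an additive homomorphism
  let coords : Grassmann k q →+ ((Module.Basis.ofVectorSpaceIndex k (Grassmann k q)) → k) :=
    { toFun := fun v i => b.repr v i
      map_zero' := by funext i; simp
      map_add' := fun x y => by funext i; simp }
  have hind : Topology.IsInducing (⇑coords) := ⟨rfl⟩
  haveI hCA : ContinuousAdd (Grassmann k q) := hind.continuousAdd coords
  have hcoord : ∀ i, Continuous fun v : Grassmann k q => b.repr v i := fun i =>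
    (continuous_apply i).comp hind.continuous
  -- continuity of scalar multiplication with a fixed vector
  have hsmulvec : ∀ g : Grassmann k q, Continuous fun r : k => r • g := by
    intro g
    apply continuous_induced_rng.mpr
    apply continuous_pi
    intro i
    have : (fun r : k => b.repr (r • g) i) = fun r : k => r * b.repr g i := by
      funext r; simp
    show Continuous fun r : k => b.repr (r • g) i
    rw [this]
    exact continuous_id.mul continuous_const
  -- continuity of scalar multiplication by a fixed scalar
  have hsmulconst : ∀ c : k, Continuous fun g : Grassmann k q => c • g := by
    intro c
    apply continuous_induced_rng.mpr
    apply continuous_pi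
    intro i
    have : (fun g : Grassmann k q => b.repr (c • g) i)
        = fun g : Grassmann k q => c * b.repr g i := by
      funext g; simp
    show Continuous fun g : Grassmann k q => b.repr (c • g) i
    rw [this]
    exact continuous_const.mul (hcoord i)
  -- continuity of multiplication
  have hmul : Continuous fun z : Grassmann k q × Grassmann k q => z.1 * z.2 := by
    have key : ∀ z : Grassmann k q × Grassmann k q, z.1 * z.2 =
        ∑ i, ∑ j, (b.repr z.1 i * b.repr z.2 j) • (b i * b j) := by
      intro z
      conv_lhs => rw [← b.sum_repr z.1, ← b.sum_repr z.2]
      rw [Finset.sum_mul_sum]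
      exact Finset.sum_congr rfl fun i _ => Finset.sum_congr rfl fun j _ =>
        smul_mul_smul_comm _ _ _ _
    rw [show (fun z : Grassmann k q × Grassmann k q => z.1 * z.2)
        = fun z => ∑ i, ∑ j, (b.repr z.1 i * b.repr z.2 j) • (b i * b j) from
      funext key]
    refine continuous_finset_sum _ fun i _ => continuous_finset_sum _ fun j _ => ?_
    exact (hsmulvec (b i * b j)).comp
      (((hcoord i).comp continuous_fst).mul ((hcoord j).comp continuous_snd))
  -- continuity of `y ↦ oddLift y x` for every fixed `x`
  have hlift : ∀ x : Grassmann k p,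
      Continuous fun y : Fin p → grassGrade k q 1 => oddLift y x := by
    intro x
    induction x using ExteriorAlgebra.induction with
    | algebraMap r =>
      simp only [AlgHom.commutes]
      exact continuous_const
    | ι m =>
      have : (fun y : Fin p → grassGrade k q 1 => oddLift y (ExteriorAlgebra.ι k m))
          = fun y => ∑ i, m i • ((y i : Grassmann k q)) := by
        funext y; rw [oddLift_ι, oddVec_apply]
      rw [this]
      exact continuous_finset_sum _ fun i _ =>
        (hsmulconst (m i)).comp (continuous_subtype_val.comp (continuous_apply i))
    | mul a c iha ihc =>
      have : (fun y : Fin p → grassGrade k q 1 => oddLift y (a * c))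
          = (fun z : Grassmann k q × Grassmann k q => z.1 * z.2)
            ∘ fun y => (oddLift y a, oddLift y c) := by
        funext y; simp [map_mul]
      rw [this]
      exact hmul.comp (iha.prodMk ihc)
    | add a c iha ihc =>
      simp only [map_add]
      exact iha.add ihc
  rw [isHomeomorph_iff_exists_inverse]
  refine ⟨?_, fun y => ⟨oddLift y, oddLift_parity y⟩, ?_, ?_, ?_⟩
  · -- continuity of the forward map
    apply continuous_pi
    intro i
    apply Continuous.subtype_mk
    exact (continuous_apply (xi k p i)).comp continuous_induced_dom
  · -- left inverse
    intro φ
    apply Subtype.ext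
    apply grass_algHom_ext
    intro i
    exact oddLift_xi _ i
  · -- right inverse
    intro y
    funext i
    apply Subtype.ext
    exact oddLift_xi y i
  · -- continuity of the inverse map
    apply continuous_induced_rng.mpr
    apply continuous_pi
    intro x
    exact hlift x
end
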